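/- arXiv:2402.10718 — 4 statements merged into one kernel-verified Lean document; each statement's English description precedes it below -/
import Mathlib

section
/- The set of matrices $A \in \mathbb{C}^{p\times p}$ at which a power series $\sum_{n=0}^\infty A^n F_n$ with $\limsup_n \|F_n\|^{1/n} = \infty$ converges has empty interior in $\mathbb{C}^{p\times p}$. -/
open scoped ENNReal

attribute [local instance] Matrix.linftyOpNormedRing Matrix.linftyOpNormedAlgebra

/-- If `limsup ‖Fₙ‖^{1/n} = ∞`, the set of matrices `A` at which `∑ Aⁿ Fₙ` converges
has empty interior. -/
theorem stmt2 {p : ℕ}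
    (F : ℕ → Matrix (Fin p) (Fin p) ℂ)
    (hF : Filter.limsup (fun n => (‖F n‖₊ : ℝ≥0∞) ^ (1 / (n : ℝ))) Filter.atTop = ⊤) :
    interior {A : Matrix (Fin p) (Fin p) ℂ |
      ∃ L : Matrix (Fin p) (Fin p) ℂ,
        Filter.Tendsto (fun N => ∑ n ∈ Finset.range N, A ^ n * F n)
          Filter.atTop (nhds L)} = ∅ := by
  by_contra h
  obtain ⟨A₀, hA₀⟩ := Set.nonempty_iff_ne_empty.2 h
  obtain ⟨ε, hε, hball⟩ := Metric.isOpen_iff.1 isOpen_interior A₀ hA₀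
  -- find an invertible matrix in the ball
  obtain ⟨z, hzε, hzu⟩ : ∃ z : ℂ, ‖z‖ < ε ∧ IsUnit (A₀ + z • 1) := by
    have hsp := Matrix.finite_spectrum (R := ℂ) A₀
    have hinf : ({z : ℂ | ‖z‖ < ε}).Infinite := by
      have h1 : ((fun t : ℝ => (t : ℂ)) '' Set.Ioo 0 ε).Infinite :=
        (Set.Ioo_infinite hε).image (fun a _ b _ h => by exact_mod_cast h)
      refine h1.mono ?_
      rintro w ⟨t, ht, rfl⟩
      simp only [Set.mem_setOf_eq, Complex.norm_real, Real.norm_eq_abs]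
      rw [abs_of_pos ht.1]; exact ht.2
    have hfin2 : ({z : ℂ | -z ∈ spectrum ℂ A₀}).Finite :=
      hsp.preimage (f := fun z : ℂ => -z) (fun a _ b _ h => by simpa using h)
    obtain ⟨z, hz⟩ := (hinf.diff hfin2).nonempty
    refine ⟨z, hz.1, ?_⟩
    have hz2 : IsUnit (algebraMap ℂ (Matrix (Fin p) (Fin p) ℂ) (-z) - A₀) :=
      spectrum.notMem_iff.mp hz.2
    rw [Algebra.algebraMap_eq_smul_one] at hz2
    have : (-z) • (1 : Matrix (Fin p) (Fin p) ℂ) - A₀ = -(A₀ + z • 1) := by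
      rw [neg_smul, neg_add]; abel
    rw [this] at hz2
    exact (IsUnit.neg_iff _).mp hz2
  set A : Matrix (Fin p) (Fin p) ℂ := A₀ + z • 1 with hA
  -- A is in the ball, hence in the convergence set
  have hnorm1 : ‖(1 : Matrix (Fin p) (Fin p) ℂ)‖ ≤ 1 := by
    rcases Nat.eq_zero_or_pos p with hp | hp
    · subst hp
      rw [Subsingleton.elim (1 : Matrix (Fin 0) (Fin 0) ℂ) 0, norm_zero]
      exact zero_le_one
    · have : Nonempty (Fin p) := ⟨⟨0, hp⟩⟩
      exact le_of_eq norm_one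
  have hAmem : A ∈ Metric.ball A₀ ε := by
    rw [Metric.mem_ball, dist_eq_norm]
    have : A - A₀ = z • 1 := by rw [hA]; abel
    rw [this]
    calc ‖z • (1 : Matrix (Fin p) (Fin p) ℂ)‖ = ‖z‖ * ‖(1 : Matrix (Fin p) (Fin p) ℂ)‖ :=
          norm_smul z 1
      _ ≤ ‖z‖ * 1 := by gcongr
      _ = ‖z‖ := mul_one _
      _ < ε := hzε
  obtain ⟨L, hL⟩ := interior_subset (hball hAmem)
  -- the terms tend to zero, hence are bounded
  have hterm : Filter.Tendsto (fun n => A ^ n * F n) Filter.atTop (nhds 0) := by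
    have h1 : Filter.Tendsto
        (fun N => ∑ n ∈ Finset.range (N + 1), A ^ n * F n - ∑ n ∈ Finset.range N, A ^ n * F n)
        Filter.atTop (nhds (L - L)) :=
      (hL.comp (Filter.tendsto_add_atTop_nat 1)).sub hL
    rw [sub_self] at h1
    refine h1.congr fun N => ?_
    rw [Finset.sum_range_succ, add_sub_cancel_left]
  obtain ⟨M, hM⟩ : ∃ M : ℝ, ∀ n, ‖A ^ n * F n‖ ≤ M := by
    obtain ⟨M, hM⟩ := hterm.norm.bddAbove_range
    exact ⟨M, fun n => hM ⟨n, rfl⟩⟩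
  -- use the inverse of A to bound ‖F n‖
  obtain ⟨u, hu⟩ := hzu
  set B : Matrix (Fin p) (Fin p) ℂ := ↑u⁻¹ with hB
  have hFeq : ∀ n, F n = B ^ n * (A ^ n * F n) := by
    intro n
    rw [← mul_assoc]
    have : B ^ n * A ^ n = 1 := by
      rw [hB, ← hu, ← Units.val_pow_eq_pow_val, ← Units.val_pow_eq_pow_val, ← Units.val_mul,
        inv_pow, inv_mul_cancel, Units.val_one]
    rw [this, one_mul]
  -- key inequality in ℝ≥0∞
  set C : ℝ≥0∞ := (‖B‖₊ : ℝ≥0∞) with hC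
  set K : ℝ≥0∞ := max (ENNReal.ofReal M) 1 with hK
  have hbound : ∀ n : ℕ, 1 ≤ n → (‖F n‖₊ : ℝ≥0∞) ^ (1 / (n : ℝ)) ≤ C * K := by
    intro n hn
    have hn' : (n : ℝ) ≠ 0 := Nat.cast_ne_zero.mpr (by omega)
    have h1 : (‖F n‖₊ : ℝ≥0∞) ≤ C ^ n * K := by
      rw [hFeq n]
      calc (‖B ^ n * (A ^ n * F n)‖₊ : ℝ≥0∞)
          ≤ (‖B ^ n‖₊ : ℝ≥0∞) * ‖A ^ n * F n‖₊ := by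
            exact_mod_cast nnnorm_mul_le _ _
        _ ≤ C ^ n * K := by
            refine mul_le_mul' ?_ ?_
            · rw [hC, ← ENNReal.coe_pow]
              exact_mod_cast nnnorm_pow_le' B (by omega)
            · rw [hK]
              refine le_max_of_le_left ?_
              rw [← ENNReal.ofReal_coe_nnreal, coe_nnnorm]
              exact ENNReal.ofReal_le_ofReal (hM n)
    calc (‖F n‖₊ : ℝ≥0∞) ^ (1 / (n : ℝ)) ≤ (C ^ n * K) ^ (1 / (n : ℝ)) :=
          ENNReal.rpow_le_rpow h1 (by positivity)
      _ = (C ^ n) ^ (1 / (n : ℝ)) * K ^ (1 / (n : ℝ)) :=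
          ENNReal.mul_rpow_of_nonneg _ _ (by positivity)
      _ = C * K ^ (1 / (n : ℝ)) := by
          rw [← ENNReal.rpow_natCast C n, ← ENNReal.rpow_mul,
            mul_one_div_cancel hn', ENNReal.rpow_one]
      _ ≤ C * K ^ (1 : ℝ) := by
          gcongr
          · exact le_max_right _ _
          · rw [div_le_one (by positivity)]
            exact_mod_cast hn
      _ = C * K := by rw [ENNReal.rpow_one]
  -- conclude
  have hlimsup : Filter.limsup (fun n => (‖F n‖₊ : ℝ≥0∞) ^ (1 / (n : ℝ))) Filter.atTop ≤ C * K := by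
    refine Filter.limsup_le_of_le ?_ ?_
    · isBoundedDefault
    · filter_upwards [Filter.eventually_ge_atTop 1] with n hn using hbound n hn
  rw [hF] at hlimsup
  have hCK : C * K < ⊤ := by
    refine ENNReal.mul_lt_top ?_ ?_
    · exact ENNReal.coe_lt_top
    · rw [hK]
      exact max_lt ENNReal.ofReal_lt_top ENNReal.one_lt_top
  exact absurd (top_le_iff.mp hlimsup) (by simpa using hCK.ne)
end

section
/- Let $F(Z) = \sum_{n=0}^\infty Z^n F_n$ be a matrix power series with $\limsup_n \|F_n\|^{1/n} \le 1/R$, and let $G$ be another matrix power series with radius $\ge R$. Then for any $A \in \mathbb{C}^{p\times p}$ with $\rho(A) < R$, the Cauchy product satisfies $(F\star G)(A) = \sum_{n=0}^\infty A^n F(A) G_n$. In particular, if $F(A) = 0$ then $(F\star G)(A) = 0$. -/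
set_option maxHeartbeats 1000000

open scoped ENNReal

attribute [local instance] Matrix.linftyOpNormedRing Matrix.linftyOpNormedAlgebra

private lemma aux_bound {M : Type*} [SeminormedAddCommGroup M] (f : ℕ → M) (t : ℝ) (ht : 0 < t)
    (h : ∀ᶠ n in Filter.atTop, (‖f n‖₊ : ℝ≥0∞) ^ (1 / (n : ℝ)) < ENNReal.ofReal t) :
    ∃ C : ℝ, 1 ≤ C ∧ ∀ n, ‖f n‖ ≤ C * t ^ n := by
  obtain ⟨N, hN⟩ := Filter.eventually_atTop.mp h
  set N' := max N 1 with hN'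
  have key : ∀ n, N' ≤ n → ‖f n‖ ≤ t ^ n := by
    intro n hn
    have hn1 : 1 ≤ n := le_trans (le_max_right _ _) hn
    have h1 := hN n (le_trans (le_max_left _ _) hn)
    have hn0 : (0:ℝ) < (n:ℝ) := by exact_mod_cast hn1
    have h2 : ((‖f n‖₊ : ℝ≥0∞) ^ (1 / (n : ℝ))) ^ (n:ℝ)
        ≤ (ENNReal.ofReal t) ^ (n:ℝ) :=
      ENNReal.rpow_le_rpow h1.le hn0.le
    rw [← ENNReal.rpow_mul, one_div, inv_mul_cancel₀ hn0.ne', ENNReal.rpow_one] at h2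
    have h3 : (ENNReal.ofReal t) ^ (n:ℝ) = ENNReal.ofReal (t ^ (n:ℝ)) :=
      ENNReal.ofReal_rpow_of_pos (p := (n:ℝ)) ht
    rw [h3] at h2
    have h4 : ENNReal.ofReal ‖f n‖ ≤ ENNReal.ofReal (t ^ (n:ℝ)) := by
      rwa [ofReal_norm, enorm_eq_nnnorm]
    have h5 : ‖f n‖ ≤ t ^ (n:ℝ) :=
      le_trans ((ENNReal.ofReal_le_ofReal_iff (Real.rpow_nonneg ht.le _)).mp h4) le_rfl
    rwa [Real.rpow_natCast] at h5
  refine ⟨1 + ∑ k ∈ Finset.range N', ‖f k‖ / t ^ k, le_add_of_nonneg_right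
    (Finset.sum_nonneg fun k _ => div_nonneg (norm_nonneg _) (pow_nonneg ht.le _)), fun n => ?_⟩
  rcases lt_or_ge n N' with hn | hn
  · have h6 : ‖f n‖ / t ^ n ≤ ∑ k ∈ Finset.range N', ‖f k‖ / t ^ k :=
      Finset.single_le_sum (f := fun k => ‖f k‖ / t ^ k)
        (fun k _ => div_nonneg (norm_nonneg _) (pow_nonneg ht.le _)) (Finset.mem_range.mpr hn)
    have htn : (0:ℝ) < t ^ n := pow_pos ht n
    calc ‖f n‖ = ‖f n‖ / t ^ n * t ^ n := by field_simp
      _ ≤ (1 + ∑ k ∈ Finset.range N', ‖f k‖ / t ^ k) * t ^ n := by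
          apply mul_le_mul_of_nonneg_right _ htn.le
          linarith
  · have := key n hn
    nlinarith [pow_pos ht n, Finset.sum_nonneg (s := Finset.range N')
      (f := fun k => ‖f k‖ / t ^ k) fun k _ => div_nonneg (norm_nonneg _) (pow_nonneg ht.le _)]

/-- For matrix power series `F`, `G` of radius `≥ R` and `ρ(A) < R`, the Cauchy product
satisfies `(F ⋆ G)(A) = ∑ₙ Aⁿ F(A) Gₙ`; in particular `(F ⋆ G)(A) = 0` whenever `F(A) = 0`. -/
theorem stmt4 {p : ℕ} (R : ℝ) (hR : 0 < R)
    (F G : ℕ → Matrix (Fin p) (Fin p) ℂ)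
    (hF : Filter.limsup (fun n => (‖F n‖₊ : ℝ≥0∞) ^ (1 / (n : ℝ))) Filter.atTop
      ≤ ENNReal.ofReal (1 / R))
    (hG : Filter.limsup (fun n => (‖G n‖₊ : ℝ≥0∞) ^ (1 / (n : ℝ))) Filter.atTop
      ≤ ENNReal.ofReal (1 / R))
    (A : Matrix (Fin p) (Fin p) ℂ)
    (hA : spectralRadius ℂ A < ENNReal.ofReal R) :
    (∑' n : ℕ, A ^ n * ∑ k ∈ Finset.range (n + 1), F k * G (n - k)
        = ∑' n : ℕ, A ^ n * (∑' m : ℕ, A ^ m * F m) * G n) ∧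
    ((∑' m : ℕ, A ^ m * F m) = 0 →
      ∑' n : ℕ, A ^ n * ∑ k ∈ Finset.range (n + 1), F k * G (n - k) = 0) := by
  -- choose r with ρ(A) < r < R
  obtain ⟨r, hr0', hρr, hrR'⟩ := (ENNReal.lt_iff_exists_real_btwn).mp hA
  have hrR : r < R := by
    rwa [ENNReal.ofReal_lt_ofReal_iff hR] at hrR'
  have hr0 : 0 < r := by
    have : (0:ℝ≥0∞) < ENNReal.ofReal r := lt_of_le_of_lt zero_le hρr
    rwa [ENNReal.ofReal_pos] at this
  -- choose t with 1/R < t < 1/r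
  have hrr : 1 / R < 1 / r := one_div_lt_one_div_of_lt hr0 hrR
  obtain ⟨t, htR, htr⟩ : ∃ t : ℝ, 1 / R < t ∧ t < 1 / r :=
    ⟨(1 / r + 1 / R) / 2, by linarith, by linarith⟩
  have ht0 : 0 < t := lt_trans (by positivity) htR
  have hrt1 : r * t < 1 := by
    have := (mul_lt_mul_of_pos_left htr hr0)
    rwa [mul_one_div_cancel hr0.ne'] at this
  have hrt0 : 0 ≤ r * t := le_of_lt (mul_pos hr0 ht0)
  -- eventual bounds
  have hAe : ∀ᶠ n : ℕ in Filter.atTop, (‖A ^ n‖₊ : ℝ≥0∞) ^ (1 / (n : ℝ)) < ENNReal.ofReal r :=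
    (spectrum.pow_nnnorm_pow_one_div_tendsto_nhds_spectralRadius A).eventually_lt_const hρr
  have hFe : ∀ᶠ n in Filter.atTop, (‖F n‖₊ : ℝ≥0∞) ^ (1 / (n : ℝ)) < ENNReal.ofReal t := by
    apply Filter.eventually_lt_of_limsup_lt (lt_of_le_of_lt hF _)
    rw [ENNReal.ofReal_lt_ofReal_iff ht0]; exact htR
  have hGe : ∀ᶠ n in Filter.atTop, (‖G n‖₊ : ℝ≥0∞) ^ (1 / (n : ℝ)) < ENNReal.ofReal t := by
    apply Filter.eventually_lt_of_limsup_lt (lt_of_le_of_lt hG _)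
    rw [ENNReal.ofReal_lt_ofReal_iff ht0]; exact htR
  obtain ⟨CA, hCA1, hCA⟩ := aux_bound (fun n => A ^ n) r hr0 hAe
  obtain ⟨CF, hCF1, hCF⟩ := aux_bound F t ht0 hFe
  obtain ⟨CG, hCG1, hCG⟩ := aux_bound G t ht0 hGe
  have hCA0 : 0 ≤ CA := le_trans zero_le_one hCA1
  have hCF0 : 0 ≤ CF := le_trans zero_le_one hCF1
  have hCG0 : 0 ≤ CG := le_trans zero_le_one hCG1
  -- summability of A^k * F k
  have hgeo : Summable fun n : ℕ => (r * t) ^ n := summable_geometric_of_lt_one hrt0 hrt1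
  have hS1 : Summable fun k : ℕ => A ^ k * F k := by
    apply Summable.of_norm_bounded (hgeo.mul_left (CA * CF))
    intro k
    calc ‖A ^ k * F k‖ ≤ ‖A ^ k‖ * ‖F k‖ := norm_mul_le _ _
      _ ≤ (CA * r ^ k) * (CF * t ^ k) :=
          mul_le_mul (hCA k) (hCF k) (norm_nonneg _) (by positivity)
      _ = CA * CF * (r * t) ^ k := by ring
  -- summability of the double family
  set f : ℕ × ℕ → Matrix (Fin p) (Fin p) ℂ := fun q => A ^ (q.1 + q.2) * F q.1 * G q.2 with hfdef
  have hS2 : Summable f := by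
    apply Summable.of_norm_bounded
      (g := fun q : ℕ × ℕ => (CA * CF * (r * t) ^ q.1) * (CA * CG * (r * t) ^ q.2))
    · exact Summable.mul_of_nonneg (hgeo.mul_left (CA * CF)) (hgeo.mul_left (CA * CG))
        (fun k => by positivity) (fun k => by positivity)
    · rintro ⟨k, m⟩
      have h1 : ‖A ^ (k + m) * F k * G m‖ ≤ ‖A ^ k‖ * ‖A ^ m‖ * ‖F k‖ * ‖G m‖ := by
        rw [pow_add]
        calc ‖A ^ k * A ^ m * F k * G m‖ ≤ ‖A ^ k * A ^ m * F k‖ * ‖G m‖ := norm_mul_le _ _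
          _ ≤ ‖A ^ k * A ^ m‖ * ‖F k‖ * ‖G m‖ := by
              gcongr; exact norm_mul_le _ _
          _ ≤ ‖A ^ k‖ * ‖A ^ m‖ * ‖F k‖ * ‖G m‖ := by
              gcongr; exact norm_mul_le _ _
      refine h1.trans ?_
      have := hCA k; have := hCA m; have := hCF k; have := hCG m
      have hAk : (0:ℝ) ≤ ‖A ^ k‖ := norm_nonneg _
      have hAm : (0:ℝ) ≤ ‖A ^ m‖ := norm_nonneg _
      calc ‖A ^ k‖ * ‖A ^ m‖ * ‖F k‖ * ‖G m‖
          ≤ (CA * r ^ k) * (CA * r ^ m) * (CF * t ^ k) * (CG * t ^ m) := by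
            gcongr
        _ = (CA * CF * (r * t) ^ k) * (CA * CG * (r * t) ^ m) := by ring
  -- the antidiagonal side
  have hL : ∑' n : ℕ, A ^ n * ∑ k ∈ Finset.range (n + 1), F k * G (n - k) = ∑' q, f q := by
    have e1 : ∀ n : ℕ, A ^ n * ∑ k ∈ Finset.range (n + 1), F k * G (n - k)
        = ∑ kl ∈ Finset.HasAntidiagonal.antidiagonal n, f kl := by
      intro n
      rw [Finset.Nat.sum_antidiagonal_eq_sum_range_succ_mk, Finset.mul_sum]
      apply Finset.sum_congr rfl
      intro k hk
      have hkn : k ≤ n := Nat.lt_succ_iff.mp (Finset.mem_range.mp hk)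
      simp only [hfdef]
      rw [Nat.add_sub_cancel' hkn, mul_assoc]
    simp_rw [e1]
    have hsig : Summable (fun x : Σ n : ℕ, {kl // kl ∈ Finset.HasAntidiagonal.antidiagonal n} =>
        f (Finset.HasAntidiagonal.sigmaAntidiagonalEquivProd x)) :=
      Finset.HasAntidiagonal.sigmaAntidiagonalEquivProd.summable_iff.mpr hS2
    calc ∑' n : ℕ, ∑ kl ∈ Finset.HasAntidiagonal.antidiagonal n, f kl
        = ∑' n : ℕ, ∑' kl : {kl // kl ∈ Finset.HasAntidiagonal.antidiagonal n}, f kl := by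
          refine tsum_congr fun n => ?_
          rw [tsum_fintype]
          exact (Finset.sum_finset_coe _ _).symm
      _ = ∑' x : Σ n : ℕ, {kl // kl ∈ Finset.HasAntidiagonal.antidiagonal n},
            f (Finset.HasAntidiagonal.sigmaAntidiagonalEquivProd x) :=
          (Summable.tsum_sigma' (fun n => (hasSum_fintype _).summable) hsig).symm
      _ = ∑' q, f q := Finset.HasAntidiagonal.sigmaAntidiagonalEquivProd.tsum_eq f
  -- the product side
  have hR2 : ∑' q, f q = ∑' n : ℕ, A ^ n * (∑' m : ℕ, A ^ m * F m) * G n := by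
    have e2 : ∑' q : ℕ × ℕ, f q.swap = ∑' q, f q := (Equiv.prodComm ℕ ℕ).tsum_eq f
    rw [← e2, Summable.tsum_prod' hS2.prod_symm (fun m => hS2.prod_symm.prod_factor m)]
    apply tsum_congr
    intro m
    have e3 : ∀ k : ℕ, f ((m, k).swap) = (A ^ m * (A ^ k * F k)) * G m := by
      intro k
      simp only [Prod.swap_prod_mk, hfdef]
      rw [add_comm k m, pow_add, mul_assoc (A ^ m), ← mul_assoc]
    simp_rw [e3]
    rw [Summable.tsum_mul_right _ (hS1.mul_left (A ^ m)), Summable.tsum_mul_left _ hS1]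
  refine ⟨hL.trans hR2, fun h0 => ?_⟩
  rw [hL.trans hR2, h0]
  simp
end

section
/- Let $A \in \mathbb{C}^{p\times p}$ with $\rho(A)<1$, $\Gamma_A = \sum_{n=0}^\infty A^nA^{*n}$, $L_A$ with $L_A^{-1} = A^*A + \Gamma_A^{-1}$, and define the coefficient sequence of the Blaschke factor $U_A$ by $U_0 = -A L_A^{1/2}$ and $U_n = A^{*(n-1)}\Gamma_A^{-1}L_A^{1/2}$ for $n \ge 1$. Then $\sum_{n=0}^\infty U_n^* U_n = I_p$, i.e., $L_A^{1/2}A^*AL_A^{1/2} + \sum_{j=0}^\infty L_A^{1/2}\Gamma_A^{-1}A^jA^{*j}\Gamma_A^{-1}L_A^{1/2} = I_p$. -/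
open scoped ENNReal NNReal Matrix ComplexOrder

attribute [local instance] Matrix.linftyOpNormedRing Matrix.linftyOpNormedAlgebra

/-- The positive semidefinite square root of a positive semidefinite matrix
(the definition `Matrix.PosSemidef.sqrt` of the older Mathlib, since removed). -/
noncomputable def Matrix.PosSemidef.sqrt {n 𝕜 : Type*} [Fintype n] [RCLike 𝕜] [DecidableEq n]
    {A : Matrix n n 𝕜} (hA : A.PosSemidef) : Matrix n n 𝕜 :=
  hA.1.eigenvectorUnitary.1 * Matrix.diagonal ((↑) ∘ Real.sqrt ∘ hA.1.eigenvalues) *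
    (star hA.1.eigenvectorUnitary : Matrix n n 𝕜)

lemma aux_sqrt_herm {n : ℕ} {M : Matrix (Fin n) (Fin n) ℂ} (hM : M.PosSemidef) :
    (hM.sqrt)ᴴ = hM.sqrt := by
  unfold Matrix.PosSemidef.sqrt
  simp [Matrix.conjTranspose_mul, Matrix.diagonal_conjTranspose, mul_assoc, Matrix.star_eq_conjTranspose]
  congr 3
  funext i
  simp

lemma aux_sqrt_mul_self {n : ℕ} {M : Matrix (Fin n) (Fin n) ℂ} (hM : M.PosSemidef) :
    hM.sqrt * hM.sqrt = M := by
  unfold Matrix.PosSemidef.sqrt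
  set V := hM.1.eigenvectorUnitary
  set D : Matrix (Fin n) (Fin n) ℂ := Matrix.diagonal ((RCLike.ofReal : ℝ → ℂ) ∘ Real.sqrt ∘ hM.1.eigenvalues)
  have hUU : (star V : Matrix (Fin n) (Fin n) ℂ) * V = 1 := by simp
  have hD : D * D = Matrix.diagonal (RCLike.ofReal ∘ hM.1.eigenvalues) := by
    rw [Matrix.diagonal_mul_diagonal]
    congr 1
    funext i
    simp only [Function.comp_apply, ← RCLike.ofReal_mul, Real.mul_self_sqrt (hM.eigenvalues_nonneg i)]
  rw [show (V : Matrix (Fin n) (Fin n) ℂ) * D * (star V : Matrix (Fin n) (Fin n) ℂ) *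
      ((V : Matrix (Fin n) (Fin n) ℂ) * D * (star V : Matrix (Fin n) (Fin n) ℂ))
      = V * (D * ((star V : Matrix (Fin n) (Fin n) ℂ) * V) * D) * (star V : Matrix (Fin n) (Fin n) ℂ) by
        simp only [mul_assoc], hUU, mul_one, hD]
  conv_rhs => rw [hM.1.spectral_theorem]
  rfl

section Aux

variable {p : ℕ}

lemma aux_nnnorm_entry_le (M : Matrix (Fin p) (Fin p) ℂ) (i j : Fin p) :
    ‖M i j‖₊ ≤ ‖M‖₊ := by
  rw [Matrix.linfty_opNNNorm_def]
  calc ‖M i j‖₊ ≤ ∑ k, ‖M i k‖₊ := Finset.single_le_sum (f := fun k => ‖M i k‖₊) (fun _ _ => zero_le) (Finset.mem_univ j)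
    _ ≤ _ := Finset.le_sup (f := fun i => ∑ k, ‖M i k‖₊) (Finset.mem_univ i)

lemma aux_nnnorm_conjTranspose_le (M : Matrix (Fin p) (Fin p) ℂ) :
    ‖Mᴴ‖₊ ≤ p * ‖M‖₊ := by
  rw [Matrix.linfty_opNNNorm_def]
  refine Finset.sup_le fun j _ => ?_
  calc ∑ i, ‖Mᴴ j i‖₊ = ∑ i, ‖M i j‖₊ := by
        simp [Matrix.conjTranspose_apply]
    _ ≤ ∑ _i : Fin p, ‖M‖₊ := Finset.sum_le_sum fun i _ => aux_nnnorm_entry_le M i j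
    _ = p * ‖M‖₊ := by simp [mul_comm]

lemma aux_geom (A : Matrix (Fin p) (Fin p) ℂ) (hA : spectralRadius ℂ A < 1) :
    ∃ r : ℝ≥0, r < 1 ∧ ∀ᶠ n : ℕ in Filter.atTop, ‖A ^ n‖₊ ≤ r ^ n := by
  obtain ⟨r, hr1, hr2⟩ := ENNReal.lt_iff_exists_nnreal_btwn.mp hA
  refine ⟨r, by exact_mod_cast hr2, ?_⟩
  have h := spectrum.pow_nnnorm_pow_one_div_tendsto_nhds_spectralRadius A
  have hev : ∀ᶠ n : ℕ in Filter.atTop,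
      (‖A ^ n‖₊ : ℝ≥0∞) ^ (1 / (n : ℝ)) < (r : ℝ≥0∞) := h.eventually (gt_mem_nhds hr1)
  filter_upwards [hev, Filter.eventually_ge_atTop 1] with n hn hn1
  have hne : (n : ℝ) ≠ 0 := Nat.cast_ne_zero.mpr (by omega)
  have h2 : ((‖A ^ n‖₊ : ℝ≥0∞) ^ (1 / (n : ℝ))) ^ (n : ℝ) ≤ (r : ℝ≥0∞) ^ (n : ℝ) :=
    ENNReal.rpow_le_rpow hn.le (Nat.cast_nonneg n)
  rw [← ENNReal.rpow_mul, one_div, inv_mul_cancel₀ hne, ENNReal.rpow_one,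
    ENNReal.rpow_natCast] at h2
  exact_mod_cast h2

lemma aux_summable (A : Matrix (Fin p) (Fin p) ℂ) (hA : spectralRadius ℂ A < 1) :
    Summable (fun n : ℕ => A ^ n * Aᴴ ^ n) := by
  obtain ⟨r, hr, hev⟩ := aux_geom A hA
  have hsum : Summable (fun n : ℕ => (p : ℝ) * ((r * r : ℝ≥0) : ℝ) ^ n) := by
    refine Summable.mul_left _ (summable_geometric_of_lt_one (by positivity) ?_)
    calc ((r * r : ℝ≥0) : ℝ) ≤ (r : ℝ) * 1 := by
          push_cast
          exact mul_le_mul_of_nonneg_left hr.le r.coe_nonneg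
      _ < 1 := by simpa using hr
  refine Summable.of_norm_bounded_eventually_nat hsum ?_
  filter_upwards [hev] with n hn
  have h1 : ‖A ^ n * Aᴴ ^ n‖₊ ≤ ‖A ^ n‖₊ * ((p : ℝ≥0) * ‖A ^ n‖₊) := by
    refine (Matrix.linfty_opNNNorm_mul _ _).trans ?_
    refine mul_le_mul_of_nonneg_left ?_ zero_le
    rw [← Matrix.conjTranspose_pow]
    exact aux_nnnorm_conjTranspose_le _
  have h2 : ‖A ^ n‖₊ * ((p : ℝ≥0) * ‖A ^ n‖₊) ≤ (p : ℝ≥0) * (r * r) ^ n := by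
    rw [mul_pow]
    calc ‖A ^ n‖₊ * ((p : ℝ≥0) * ‖A ^ n‖₊) = (p : ℝ≥0) * (‖A ^ n‖₊ * ‖A ^ n‖₊) := by ring
      _ ≤ (p : ℝ≥0) * (r ^ n * r ^ n) :=
          mul_le_mul_of_nonneg_left (mul_le_mul' hn hn) zero_le
  have := h1.trans h2
  calc ‖A ^ n * Aᴴ ^ n‖ = ((‖A ^ n * Aᴴ ^ n‖₊ : ℝ≥0) : ℝ) := rfl
    _ ≤ (((p : ℝ≥0) * (r * r) ^ n : ℝ≥0) : ℝ) := by exact_mod_cast this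
    _ = (p : ℝ) * ((r * r : ℝ≥0) : ℝ) ^ n := by push_cast; ring

end Aux

set_option maxHeartbeats 1600000 in
/-- The coefficients `U₀ = -A L_A^{1/2}`, `Uₙ = A*^{n-1} Γ_A⁻¹ L_A^{1/2}` (`n ≥ 1`) of the
Blaschke factor `U_A` satisfy `∑ₙ Uₙ* Uₙ = I`. -/
theorem stmt8 {p : ℕ} (A : Matrix (Fin p) (Fin p) ℂ)
    (hA : spectralRadius ℂ A < 1)
    (Γ : Matrix (Fin p) (Fin p) ℂ) (hΓ : Γ = ∑' n : ℕ, A ^ n * Aᴴ ^ n)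
    (L : Matrix (Fin p) (Fin p) ℂ) (hL : L⁻¹ = Aᴴ * A + Γ⁻¹)
    (hLpsd : L.PosSemidef)
    (U : ℕ → Matrix (Fin p) (Fin p) ℂ)
    (hU0 : U 0 = -(A * hLpsd.sqrt))
    (hUn : ∀ n : ℕ, 1 ≤ n → U n = Aᴴ ^ (n - 1) * Γ⁻¹ * hLpsd.sqrt) :
    ∑' n : ℕ, (U n)ᴴ * U n = 1 := by
  classical
  set g : ℕ → Matrix (Fin p) (Fin p) ℂ := fun n => A ^ n * Aᴴ ^ n with hg
  have hsum : Summable g := aux_summable A hA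
  have hΓsum : HasSum g Γ := hΓ ▸ hsum.hasSum
  -- Γ is positive definite
  have hgpsd : ∀ n, (g n).PosSemidef := by
    intro n
    have := Matrix.posSemidef_conjTranspose_mul_self (Aᴴ ^ n)
    rwa [Matrix.conjTranspose_pow, Matrix.conjTranspose_conjTranspose] at this
  have hΓpd : Γ.PosDef := by
    refine Matrix.PosDef.of_dotProduct_mulVec_pos ?_ ?_
    · have h1 : HasSum (fun n => (g n)ᴴ) Γᴴ := hΓsum.matrix_conjTranspose
      have h2 : (fun n => (g n)ᴴ) = g := by
        funext n; exact (hgpsd n).isHermitian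
      rw [h2] at h1
      exact h1.unique hΓsum
    · intro x hx
      have hφcont : Continuous fun M : Matrix (Fin p) (Fin p) ℂ =>
          dotProduct (star x) (M.mulVec x) :=
        Continuous.dotProduct continuous_const
          (continuous_id.matrix_mulVec continuous_const)
      let φ : Matrix (Fin p) (Fin p) ℂ →+ ℂ :=
        { toFun := fun M => dotProduct (star x) (M.mulVec x)
          map_zero' := by simp
          map_add' := fun M N => by simp [Matrix.add_mulVec, dotProduct_add] }
      have hφ : HasSum (fun n => φ (g n)) (φ Γ) := hΓsum.map φ hφcont
      have h0 : (0:ℂ) < φ (g 0) := by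
        simp only [φ, hg, pow_zero, one_mul, AddMonoidHom.coe_mk, ZeroHom.coe_mk,
          Matrix.one_mulVec]
        exact Matrix.dotProduct_star_self_pos_iff.mpr hx
      calc (0:ℂ) < ∑' n, φ (g n) :=
            Summable.tsum_pos hφ.summable (fun n => (hgpsd n).dotProduct_mulVec_nonneg x) 0 h0
        _ = φ Γ := hφ.tsum_eq
  have hΓdet : IsUnit Γ.det := (Matrix.isUnit_iff_isUnit_det _).mp hΓpd.isUnit
  have hΓinv : Γ⁻¹.PosDef := hΓpd.inv
  -- L⁻¹ is positive definite, L is invertible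
  have hLinvpd : (L⁻¹).PosDef := by
    rw [hL]
    exact Matrix.PosDef.posSemidef_add (Matrix.posSemidef_conjTranspose_mul_self A) hΓinv
  have hLdet : IsUnit L.det := by
    by_contra h
    have h0 : L⁻¹.det = 0 := by
      rw [Matrix.det_nonsing_inv, Ring.inverse_non_unit _ h]
    exact ((Matrix.isUnit_iff_isUnit_det _).mp hLinvpd.isUnit).ne_zero h0
  -- facts about S = sqrt L
  set S := hLpsd.sqrt with hS
  have hSS : S * S = L := aux_sqrt_mul_self hLpsd
  have hSherm : Sᴴ = S := aux_sqrt_herm hLpsd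
  have hSLinv : L⁻¹ * S = S * L⁻¹ := by
    have hcomm : S * L = L * S := by rw [← hSS, mul_assoc]
    calc L⁻¹ * S = L⁻¹ * S * (L * L⁻¹) := by rw [Matrix.mul_nonsing_inv _ hLdet, mul_one]
      _ = L⁻¹ * (S * L) * L⁻¹ := by noncomm_ring
      _ = L⁻¹ * (L * S) * L⁻¹ := by rw [hcomm]
      _ = (L⁻¹ * L) * (S * L⁻¹) := by noncomm_ring
      _ = S * L⁻¹ := by rw [Matrix.nonsing_inv_mul _ hLdet, one_mul]
  have hSLS : S * L⁻¹ * S = 1 := by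
    rw [← hSLinv, mul_assoc, hSS, Matrix.nonsing_inv_mul _ hLdet]
  -- Γ⁻¹ is Hermitian
  have hΓinvherm : (Γ⁻¹)ᴴ = Γ⁻¹ := hΓinv.isHermitian
  -- the tail terms
  have htail : ∀ n : ℕ, (U (n + 1))ᴴ * U (n + 1) = S * (Γ⁻¹ * (g n * (Γ⁻¹ * S))) := by
    intro n
    rw [hUn (n + 1) (by omega)]
    simp only [Nat.add_sub_cancel]
    rw [Matrix.conjTranspose_mul, Matrix.conjTranspose_mul, Matrix.conjTranspose_pow,
      Matrix.conjTranspose_conjTranspose, hSherm, hΓinvherm, hg]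
    noncomm_ring
  have htailsum0 : Summable (fun n => S * (Γ⁻¹ * (g n * (Γ⁻¹ * S)))) :=
    ((hsum.mul_right (Γ⁻¹ * S)).mul_left Γ⁻¹).mul_left S
  have htailsum : Summable (fun n => (U (n + 1))ᴴ * U (n + 1)) := by
    simpa only [htail] using htailsum0
  rw [tsum_eq_zero_add' htailsum]
  have htails : ∑' n, (U (n + 1))ᴴ * U (n + 1) = S * Γ⁻¹ * S := by
    calc ∑' n, (U (n + 1))ᴴ * U (n + 1)
        = ∑' n, S * (Γ⁻¹ * (g n * (Γ⁻¹ * S))) := by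
          simp only [htail]
      _ = S * ∑' n, Γ⁻¹ * (g n * (Γ⁻¹ * S)) :=
          Summable.tsum_mul_left _ ((hsum.mul_right _).mul_left _)
      _ = S * (Γ⁻¹ * ∑' n, g n * (Γ⁻¹ * S)) := by
          rw [Summable.tsum_mul_left _ (hsum.mul_right _)]
      _ = S * (Γ⁻¹ * ((∑' n, g n) * (Γ⁻¹ * S))) := by
          rw [Summable.tsum_mul_right _ hsum]
      _ = S * Γ⁻¹ * S := by
          rw [← hΓ, ← mul_assoc Γ⁻¹ Γ, Matrix.nonsing_inv_mul _ hΓdet, one_mul, ← mul_assoc]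
  rw [htails, hU0]
  have hU0' : (-(A * S))ᴴ * -(A * S) = S * (Aᴴ * A) * S := by
    rw [Matrix.conjTranspose_neg, Matrix.conjTranspose_mul, hSherm]
    noncomm_ring
  rw [hU0']
  calc S * (Aᴴ * A) * S + S * Γ⁻¹ * S = S * (Aᴴ * A + Γ⁻¹) * S := by noncomm_ring
    _ = S * L⁻¹ * S := by rw [← hL]
    _ = 1 := hSLS
end

section
/- Let $\mathfrak{G}, \mathfrak{H}$ be Hilbert spaces and $T : \mathfrak{G} \to \mathfrak{H}$ a contraction. Then an element $f \in \mathfrak{H}$ lies in the range of $\sqrt{I_{\mathfrak{H}} - TT^*}$ if and only if $\sup_{g\in\mathfrak{G}}\big(\|f + Tg\|_{\mathfrak{H}}^2 - \|g\|_{\mathfrak{G}}^2\big) < \infty$. -/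
set_option maxHeartbeats 1000000

open scoped ComplexInnerProductSpace

/-- Fillmore–Williams / de Branges–Rovnyak: for a contraction `T : 𝔊 → ℌ` between Hilbert
spaces, with `Q` the positive square root of `I - T T*`, an element `f ∈ ℌ` lies in the
range of `Q = √(I - T T*)` iff `sup_g (‖f + T g‖² - ‖g‖²) < ∞`. -/
theorem stmt18 {𝔊 ℌ : Type*}
    [NormedAddCommGroup 𝔊] [InnerProductSpace ℂ 𝔊] [CompleteSpace 𝔊]
    [NormedAddCommGroup ℌ] [InnerProductSpace ℂ ℌ] [CompleteSpace ℌ]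
    (T : 𝔊 →L[ℂ] ℌ) (hT : ‖T‖ ≤ 1)
    (Q : ℌ →L[ℂ] ℌ) (hQpos : Q.IsPositive)
    (hQ : Q ∘L Q = 1 - T ∘L T.adjoint) (f : ℌ) :
    f ∈ Set.range Q ↔
      BddAbove (Set.range fun g : 𝔊 => ‖f + T g‖ ^ 2 - ‖g‖ ^ 2) := by
  have hsym : ∀ x y : ℌ, (⟪Q x, y⟫ : ℂ) = ⟪x, Q y⟫ := fun x y =>
    hQpos.isSelfAdjoint.isSymmetric x y
  have hQQ : ∀ w : ℌ, Q (Q w) = w - T (T.adjoint w) := by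
    intro w
    have := DFunLike.congr_fun hQ w
    simpa using this
  have hkey : ∀ w : ℌ, ‖Q w‖ ^ 2 + ‖T.adjoint w‖ ^ 2 = ‖w‖ ^ 2 := by
    intro w
    have h1 : (⟪Q w, Q w⟫ : ℂ) + ⟪T.adjoint w, T.adjoint w⟫ = ⟪w, w⟫ := by
      rw [hsym, hQQ, inner_sub_right, ContinuousLinearMap.adjoint_inner_left]
      ring
    rw [inner_self_eq_norm_sq_to_K, inner_self_eq_norm_sq_to_K,
      inner_self_eq_norm_sq_to_K] at h1
    exact_mod_cast h1
  constructor
  · rintro ⟨k, rfl⟩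
    refine ⟨‖k‖ ^ 2, ?_⟩
    rintro x ⟨g, rfl⟩
    show ‖Q k + T g‖ ^ 2 - ‖g‖ ^ 2 ≤ ‖k‖ ^ 2
    set w := Q k + T g with hw
    have hinner : (⟪w, w⟫ : ℂ) = ⟪k, Q w⟫ + ⟪g, T.adjoint w⟫ := by
      conv_lhs => rw [hw]
      rw [inner_add_left, hsym, ContinuousLinearMap.adjoint_inner_right]
    have hle : ‖w‖ ^ 2 ≤ ‖k‖ * ‖Q w‖ + ‖g‖ * ‖T.adjoint w‖ := by
      have h2 : ‖(⟪w, w⟫ : ℂ)‖ = ‖w‖ ^ 2 := by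
        rw [inner_self_eq_norm_sq_to_K]
        simp
      calc ‖w‖ ^ 2 = ‖(⟪w, w⟫ : ℂ)‖ := h2.symm
        _ = ‖(⟪k, Q w⟫ : ℂ) + ⟪g, T.adjoint w⟫‖ := by rw [hinner]
        _ ≤ ‖(⟪k, Q w⟫ : ℂ)‖ + ‖(⟪g, T.adjoint w⟫ : ℂ)‖ := norm_add_le _ _
        _ ≤ ‖k‖ * ‖Q w‖ + ‖g‖ * ‖T.adjoint w‖ :=
            add_le_add (norm_inner_le_norm _ _) (norm_inner_le_norm _ _)
    by_cases hw0 : ‖w‖ = 0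
    · rw [hw0]
      nlinarith [sq_nonneg ‖g‖, sq_nonneg ‖k‖]
    · have hwpos : 0 < ‖w‖ := lt_of_le_of_ne (norm_nonneg _) (Ne.symm hw0)
      nlinarith [hkey w, sq_nonneg (‖k‖ * ‖T.adjoint w‖ - ‖g‖ * ‖Q w‖),
        norm_nonneg (Q w), norm_nonneg (T.adjoint w), norm_nonneg k, norm_nonneg g,
        mul_pos hwpos hwpos]
  · intro hbdd
    obtain ⟨c, hc⟩ := hbdd
    have hcg : ∀ g : 𝔊, ‖f + T g‖ ^ 2 - ‖g‖ ^ 2 ≤ c := fun g => hc (Set.mem_range_self g)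
    have hf2 : ‖f‖ ^ 2 ≤ c := by simpa using hcg 0
    have hc0 : 0 ≤ c := le_trans (sq_nonneg ‖f‖) hf2
    have hbound : ∀ h : ℌ, ‖(⟪f, h⟫ : ℂ)‖ ^ 2 ≤ c * ‖Q h‖ ^ 2 := by
      intro h
      by_cases ha : (⟪f, h⟫ : ℂ) = 0
      · have h0 : (0 : ℝ) ≤ c * ‖Q h‖ ^ 2 := by positivity
        simpa [ha] using h0
      set A := ‖(⟪f, h⟫ : ℂ)‖ with hA
      have hApos : 0 < A := norm_pos_iff.mpr ha
      set β := ‖T.adjoint h‖ ^ 2 with hbdef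
      set q := ‖Q h‖ ^ 2 with hqdef
      have hβ : β = ‖h‖ ^ 2 - q := by
        have := hkey h
        linarith
      have hβ0 : 0 ≤ β := by positivity
      have hq0 : 0 ≤ q := by positivity
      have main : ∀ t : ℝ, 0 ≤ t →
          A ^ 2 + 2 * t * β * A ≤ t ^ 2 * β * q + c * ‖h‖ ^ 2 := by
        intro t ht
        set g : 𝔊 := (((t : ℂ) * (starRingEnd ℂ ⟪f, h⟫)) / (A : ℂ)) • T.adjoint h with hg
        have hA0 : (A : ℂ) ≠ 0 := by
          exact_mod_cast hApos.ne'
        have hlam : ‖((t : ℂ) * (starRingEnd ℂ ⟪f, h⟫)) / (A : ℂ)‖ = t := by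
          rw [norm_div, norm_mul, RCLike.norm_conj, Complex.norm_real, Complex.norm_real,
            Real.norm_of_nonneg ht, ← hA, Real.norm_of_nonneg hApos.le]
          field_simp
        have hgnorm : ‖g‖ ^ 2 = t ^ 2 * β := by
          rw [hg, norm_smul, hlam, mul_pow, hbdef]
        have hip : (⟪f + T g, h⟫ : ℂ) = ⟪f, h⟫ * (((A + t * β) / A : ℝ) : ℂ) := by
          rw [inner_add_left, ← ContinuousLinearMap.adjoint_inner_right T g h, hg,
            inner_smul_left, inner_self_eq_norm_sq_to_K]
          simp only [map_div₀, map_mul, Complex.conj_conj, Complex.conj_ofReal]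
          rw [hbdef]
          push_cast
          field_simp
          rfl
        have hipn : ‖(⟪f + T g, h⟫ : ℂ)‖ = A + t * β := by
          rw [hip, norm_mul, ← hA, Complex.norm_real,
            Real.norm_of_nonneg (by positivity : (0:ℝ) ≤ (A + t * β) / A)]
          field_simp
        have hcs : (A + t * β) ^ 2 ≤ (c + t ^ 2 * β) * ‖h‖ ^ 2 := by
          have h1 : ‖(⟪f + T g, h⟫ : ℂ)‖ ≤ ‖f + T g‖ * ‖h‖ := norm_inner_le_norm _ _
          rw [hipn] at h1
          have h2 : ‖f + T g‖ ^ 2 ≤ c + t ^ 2 * β := by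
            have := hcg g
            rw [hgnorm] at this
            linarith
          nlinarith [mul_self_le_mul_self (by positivity : (0:ℝ) ≤ A + t * β) h1,
            mul_le_mul_of_nonneg_right h2 (sq_nonneg ‖h‖),
            norm_nonneg (f + T g), norm_nonneg h]
        nlinarith [hcs, hβ]
      by_cases hq : q = 0
      · exfalso
        have hβh : β = ‖h‖ ^ 2 := by rw [hβ, hq]; ring
        by_cases hβz : β = 0
        · have := main 0 le_rfl
          have hh0 : ‖h‖ ^ 2 = 0 := by rw [← hβh, hβz]
          nlinarith
        · have hβpos : 0 < β := lt_of_le_of_ne hβ0 (Ne.symm hβz)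
          have hm := main ((c * ‖h‖ ^ 2) / (2 * β * A) + 1) (by positivity)
          rw [hq] at hm
          have hexp : 2 * ((c * ‖h‖ ^ 2) / (2 * β * A) + 1) * β * A
              = c * ‖h‖ ^ 2 + 2 * β * A := by
            field_simp
          nlinarith [mul_pos hβpos hApos]
      · have hqpos : 0 < q := lt_of_le_of_ne hq0 (Ne.symm hq)
        have hH : q ≤ ‖h‖ ^ 2 := by linarith
        have hHpos : 0 < ‖h‖ ^ 2 := lt_of_lt_of_le hqpos hH
        have hs := main (A / q) (by positivity)
        set s := A / q with hsdef
        have e1 : s * q = A := div_mul_cancel₀ A (ne_of_gt hqpos)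
        have hA2 : A ^ 2 = s ^ 2 * q ^ 2 := by rw [← e1]; ring
        have h2 : s * β * A = s ^ 2 * β * q := by rw [← e1]; ring
        have h4 : s ^ 2 * q * ‖h‖ ^ 2 = s ^ 2 * q * β + s ^ 2 * q * q := by
          rw [hβ]; ring
        have h3 : 0 ≤ (c - s ^ 2 * q) * ‖h‖ ^ 2 := by nlinarith [hs, hA2, h2, h4]
        have h5 : 0 ≤ c - s ^ 2 * q := by nlinarith [h3, hHpos]
        nlinarith [h5, hqpos, hA2]
    -- Douglas-type argument: build a functional on the range of Q
    set s := Real.sqrt c with hsdef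
    have hs0 : 0 ≤ s := Real.sqrt_nonneg c
    have hb : ∀ h : ℌ, ‖(⟪f, h⟫ : ℂ)‖ ≤ s * ‖Q h‖ := by
      intro h
      have h1 := hbound h
      have h2 : ‖(⟪f, h⟫ : ℂ)‖ ^ 2 ≤ (s * ‖Q h‖) ^ 2 := by
        rw [mul_pow, hsdef, Real.sq_sqrt hc0]
        exact h1
      have h3 : (0:ℝ) ≤ s * ‖Q h‖ := by positivity
      nlinarith [norm_nonneg (⟪f, h⟫ : ℂ)]
    have hind : ∀ h h' : ℌ, Q h = Q h' → (⟪f, h⟫ : ℂ) = ⟪f, h'⟫ := by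
      intro h h' he
      have h1 := hb (h - h')
      rw [map_sub, he, sub_self, norm_zero, mul_zero] at h1
      have h2 : (⟪f, h - h'⟫ : ℂ) = 0 := norm_le_zero_iff.mp h1
      rw [inner_sub_right] at h2
      exact sub_eq_zero.mp h2
    set p : Submodule ℂ ℌ := LinearMap.range (Q : ℌ →ₗ[ℂ] ℌ) with hp
    have hsec0 : ∀ y : p, ∃ h : ℌ, Q h = (y : ℌ) := fun y => y.2
    choose sec hsec using hsec0
    let φ : p →ₗ[ℂ] ℂ :=
      { toFun := fun y => ⟪f, sec y⟫
        map_add' := by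
          intro y z
          have he : Q (sec (y + z)) = Q (sec y + sec z) := by
            simp [map_add, hsec]
          rw [hind _ _ he, inner_add_right]
        map_smul' := by
          intro a y
          have he : Q (sec (a • y)) = Q (a • sec y) := by
            simp [map_smul, hsec]
          rw [hind _ _ he, inner_smul_right]
          rfl }
    have hφb : ∀ y : p, ‖φ y‖ ≤ s * ‖y‖ := by
      intro y
      have h1 := hb (sec y)
      rw [hsec] at h1
      exact h1
    let φc : p →L[ℂ] ℂ := φ.mkContinuous s hφb
    obtain ⟨Φ, hΦ, -⟩ := exists_extension_norm_eq p φc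
    refine ⟨(InnerProductSpace.toDual ℂ ℌ).symm Φ, ?_⟩
    apply ext_inner_right ℂ
    intro v
    rw [hsym]
    have hmem : Q v ∈ p := ⟨v, rfl⟩
    have h1 : (⟪(InnerProductSpace.toDual ℂ ℌ).symm Φ, Q v⟫ : ℂ) = Φ (Q v) :=
      InnerProductSpace.toDual_symm_apply
    have h2 : Φ (Q v) = φc ⟨Q v, hmem⟩ := hΦ ⟨Q v, hmem⟩
    have h3 : φc (⟨Q v, hmem⟩ : p) = ⟪f, sec ⟨Q v, hmem⟩⟫ := rfl
    have h4 : (⟪f, sec ⟨Q v, hmem⟩⟫ : ℂ) = ⟪f, v⟫ := by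
      apply hind
      rw [hsec]
    rw [h1, h2, h3, h4]
end
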